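/- Let X₁, X₂ be independent Rayleigh random variables with densities (x/σᵢ²)e^{−x²/(2σᵢ²)} on (0,∞), i = 1,2. Then X = X₁X₂ has density p_X(x) = (x/σ²)·K₀(x/σ) for x ≥ 0, where σ = σ₁σ₂ and K₀ is the modified Bessel function of the second kind of order zero. -/

import Mathlib

open MeasureTheory Real

/-- Modified Bessel function of the second kind of order zero,
`K₀(z) = ∫_0^∞ e^{−z cosh t} dt`. -/
noncomputable def besselK0 (z : ℝ) : ℝ := ∫ t in Set.Ioi (0 : ℝ), Real.exp (-z * Real.cosh t)

/-- Product of two independent Rayleigh r.v.s: the Mellin-convolution density of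
`X = X₁X₂` equals `(x/σ²)·K₀(x/σ)` where `σ = σ₁σ₂` (double-Rayleigh distribution). -/
lemma key_cv (c z : ℝ) (hc : 0 < c) :
    ∫ u in Set.Ioi (0:ℝ), (1/u) * Real.exp (-(z/2) * ((u/c)^2 + (c/u)^2))
      = ∫ t : ℝ, (1/2) * Real.exp (-z * Real.cosh t) := by
  have hrange : (fun t : ℝ => c * Real.exp (t/2)) '' Set.univ = Set.Ioi (0:ℝ) := by
    ext y
    simp only [Set.image_univ, Set.mem_range, Set.mem_Ioi]
    constructor
    · rintro ⟨t, rfl⟩; positivity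
    · intro hy
      refine ⟨2 * Real.log (y / c), ?_⟩
      have h2 : 2 * Real.log (y / c) / 2 = Real.log (y / c) := by ring
      rw [h2, Real.exp_log (by positivity)]
      field_simp
  have hderiv : ∀ t ∈ Set.univ, HasDerivWithinAt (fun t : ℝ => c * Real.exp (t/2))
      (c/2 * Real.exp (t/2)) Set.univ t := by
    intro t _
    have : HasDerivAt (fun t : ℝ => c * Real.exp (t/2)) (c * (Real.exp (t/2) * (1/2))) t :=
      (((hasDerivAt_id t).div_const 2).exp).const_mul c
    exact this.hasDerivWithinAt.congr_deriv (by ring)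
  have hinj : Set.InjOn (fun t : ℝ => c * Real.exp (t/2)) Set.univ := by
    intro a _ b _ hab
    simp only at hab
    have := Real.exp_injective (mul_left_cancel₀ (ne_of_gt hc) hab)
    linarith
  have key := MeasureTheory.integral_image_eq_integral_abs_deriv_smul MeasurableSet.univ
    hderiv hinj (fun u => (1/u) * Real.exp (-(z/2) * ((u/c)^2 + (c/u)^2)))
  rw [hrange] at key
  rw [key, Measure.restrict_univ]
  congr 1
  ext t
  have he : (0:ℝ) < Real.exp (t/2) := Real.exp_pos _
  have h1 : (c * Real.exp (t/2) / c)^2 = Real.exp t := by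
    rw [mul_div_cancel_left₀ _ (ne_of_gt hc), sq, ← Real.exp_add]
    norm_num
  have h2 : (c / (c * Real.exp (t/2)))^2 = Real.exp (-t) := by
    rw [div_mul_cancel_left₀ (ne_of_gt hc), ← Real.exp_neg, sq, ← Real.exp_add]
    ring_nf
  rw [smul_eq_mul, abs_of_pos (by positivity), h1, h2, Real.cosh_eq]
  have h3 : -(z/2) * (Real.exp t + Real.exp (-t)) = -z * ((Real.exp t + Real.exp (-t))/2) := by
    ring
  rw [h3]
  field_simp

lemma half_line (z : ℝ) :
    ∫ t : ℝ, (1/2) * Real.exp (-z * Real.cosh t)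
      = ∫ t in Set.Ioi (0:ℝ), Real.exp (-z * Real.cosh t) := by
  have h1 : ∫ t : ℝ, (1/2) * Real.exp (-z * Real.cosh t)
      = ∫ t : ℝ, (fun s => (1/2) * Real.exp (-z * Real.cosh s)) |t| := by
    congr 1; ext t; simp [Real.cosh_abs]
  rw [h1, integral_comp_abs (f := fun s => (1/2) * Real.exp (-z * Real.cosh s)),
    MeasureTheory.integral_const_mul]
  ring

theorem product_rayleigh_rayleigh_density (σ₁ σ₂ : ℝ) (hσ₁ : 0 < σ₁) (hσ₂ : 0 < σ₂) :
    ∀ x : ℝ, 0 ≤ x →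
      ∫ x₁ in Set.Ioi (0 : ℝ),
          ((x₁ / σ₁ ^ 2) * Real.exp (-x₁ ^ 2 / (2 * σ₁ ^ 2))) *
            (((x / x₁) / σ₂ ^ 2) * Real.exp (-(x / x₁) ^ 2 / (2 * σ₂ ^ 2))) *
            (1 / x₁) =
        (x / (σ₁ * σ₂) ^ 2) * besselK0 (x / (σ₁ * σ₂)) := by
  intro x hx
  rcases hx.eq_or_lt with rfl | hx
  · simp
  · set z : ℝ := x / (σ₁ * σ₂) with hz
    set c : ℝ := Real.sqrt (σ₁ * x / σ₂) with hcdef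
    have hcpos : 0 < c := Real.sqrt_pos.mpr (by positivity)
    have hc2 : c ^ 2 = σ₁ * x / σ₂ := Real.sq_sqrt (by positivity)
    have key : ∀ x₁ ∈ Set.Ioi (0:ℝ),
        ((x₁ / σ₁ ^ 2) * Real.exp (-x₁ ^ 2 / (2 * σ₁ ^ 2))) *
            (((x / x₁) / σ₂ ^ 2) * Real.exp (-(x / x₁) ^ 2 / (2 * σ₂ ^ 2))) *
            (1 / x₁)
          = (x / (σ₁ * σ₂) ^ 2) *
              ((1/x₁) * Real.exp (-(z/2) * ((x₁/c)^2 + (c/x₁)^2))) := by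
      intro x₁ hx₁
      have hx₁' : (0:ℝ) < x₁ := hx₁
      have harg : -x₁ ^ 2 / (2 * σ₁ ^ 2) + -(x / x₁) ^ 2 / (2 * σ₂ ^ 2)
          = -(z/2) * ((x₁/c)^2 + (c/x₁)^2) := by
        have hc2' : c ^ 2 * σ₂ = σ₁ * x := by
          rw [hc2]; field_simp
        rw [div_pow, div_pow, hc2, hz]
        field_simp
        linear_combination (σ₁ * x) * hc2'
      calc ((x₁ / σ₁ ^ 2) * Real.exp (-x₁ ^ 2 / (2 * σ₁ ^ 2))) *
            (((x / x₁) / σ₂ ^ 2) * Real.exp (-(x / x₁) ^ 2 / (2 * σ₂ ^ 2))) * (1 / x₁)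
          = ((x₁ / σ₁ ^ 2) * ((x / x₁) / σ₂ ^ 2) * (1 / x₁)) *
              (Real.exp (-x₁ ^ 2 / (2 * σ₁ ^ 2)) * Real.exp (-(x / x₁) ^ 2 / (2 * σ₂ ^ 2))) := by
            ring
        _ = (x / (σ₁ * σ₂) ^ 2) * ((1/x₁) *
              Real.exp (-(z/2) * ((x₁/c)^2 + (c/x₁)^2))) := by
            rw [← Real.exp_add, harg]
            have hcoef : (x₁ / σ₁ ^ 2) * ((x / x₁) / σ₂ ^ 2) * (1 / x₁)
                = (x / (σ₁ * σ₂) ^ 2) * (1/x₁) := by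
              field_simp
            rw [hcoef]
            ring
    rw [MeasureTheory.setIntegral_congr_fun measurableSet_Ioi key,
      MeasureTheory.integral_const_mul, key_cv c z hcpos, half_line]
    rfl
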